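/- Let A = [θw^⊤; I_r] ∈ ℝ^{(r+1)×r} where w ∈ {±1}^r and 0 ≤ θ ≤ 1/√r. Then v = (1+rθ²)^{-1/2}(1, −θw^⊤)^⊤ is a unit vector orthogonal to the column span of A, λ_r(A) ≥ 1, and ‖A‖ ≤ √(1+rθ²) ≤ √2. Moreover, for two sign vectors w, w' ∈ {±1}^r with ‖w−w'‖₂² ≥ r, the column spans U, U' of the corresponding matrices A, A' satisfy ‖sin Θ(U, U')‖ ≥ (θ/(1+rθ²))·‖w − w'‖₂ ≥ √r·θ/2. -/

import Mathlib

open scoped Matrix.Norms.L2Operator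
open Matrix

lemma cons_mulVec_sq_sum {r : ℕ} (c : Fin r → ℝ) (x : Fin r → ℝ) :
    ∑ i, ((Matrix.of (Fin.cons c (fun i j => if i = j then (1:ℝ) else 0))).mulVec x i) ^ 2
      = (∑ j, c j * x j) ^ 2 + ∑ j, (x j) ^ 2 := by
  rw [Fin.sum_univ_succ]
  simp [Matrix.mulVec, dotProduct]

lemma cons_vecMul_eq {r : ℕ} (c : Fin r → ℝ) (v : Fin (r + 1) → ℝ) :
    Matrix.vecMul v (Matrix.of (Fin.cons c (fun i j => if i = j then (1:ℝ) else 0)))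
      = fun j => v 0 * c j + v j.succ := by
  funext j
  simp only [Matrix.vecMul, dotProduct]
  rw [Fin.sum_univ_succ]
  simp [Matrix.of_apply]

set_option synthInstance.maxHeartbeats 400000 in
lemma opNorm_le_of_sq_bound {r : ℕ} (A : Matrix (Fin (r+1)) (Fin r) ℝ) (s : ℝ) (hs : 0 ≤ s)
    (hb : ∀ x : Fin r → ℝ, ∑ i, (A.mulVec x i)^2 ≤ s * ∑ j, x j ^2) :
    ‖A‖ ≤ Real.sqrt s := by
  rw [Matrix.l2_opNorm_def]
  apply ContinuousLinearMap.opNorm_le_bound _ (Real.sqrt_nonneg s)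
  intro x
  rw [LinearEquiv.trans_apply, LinearMap.coe_toContinuousLinearMap', Matrix.toEuclideanLin_apply,
    EuclideanSpace.norm_eq, EuclideanSpace.norm_eq]
  simp only [PiLp.toLp_apply, Real.norm_eq_abs, sq_abs]
  calc Real.sqrt (∑ i, (A.mulVec ((WithLp.equiv 2 (Fin r → ℝ)) x) i) ^ 2)
      ≤ Real.sqrt (s * ∑ j, ((WithLp.equiv 2 (Fin r → ℝ)) x) j ^ 2) :=
        Real.sqrt_le_sqrt (hb _)
    _ = Real.sqrt s * Real.sqrt (∑ j, ((WithLp.equiv 2 (Fin r → ℝ)) x) j ^ 2) :=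
        Real.sqrt_mul hs _
    _ = Real.sqrt s * Real.sqrt (∑ j, x j ^ 2) := rfl

/-- Let `A = [θwᵀ; I_r] ∈ ℝ^{(r+1)×r}` with `w ∈ {±1}^r` and `0 ≤ θ ≤ 1/√r`.  Then
`v = (1+rθ²)^{-1/2}(1, −θwᵀ)ᵀ` is a unit vector orthogonal to the column span of `A`,
the least singular value of `A` is at least `1` (i.e. `‖Ax‖ ≥ ‖x‖` for all `x`), and
`‖A‖ ≤ √(1+rθ²) ≤ √2`.  Moreover, for `w' ∈ {±1}^r` with `‖w−w'‖₂² ≥ r` and `U'` an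
orthonormal basis of the column span of the corresponding `A' = U'R'` (`R'` invertible),
`‖sin Θ(U,U')‖ = ‖vᵀU'‖ ≥ θ‖w−w'‖₂/(1+rθ²) ≥ √r·θ/2`. -/
theorem sign_vector_span_separation {r : ℕ} (hr : 0 < r) (θ : ℝ)
    (hθ : 0 ≤ θ) (hθ' : θ ≤ 1 / Real.sqrt r)
    (w w' : Fin r → ℝ) (hw : ∀ i, w i = 1 ∨ w i = -1) (hw' : ∀ i, w' i = 1 ∨ w' i = -1)
    (A A' : Matrix (Fin (r + 1)) (Fin r) ℝ)
    (hA : A = Matrix.of (Fin.cons (fun j => θ * w j) (fun i j => if i = j then 1 else 0)))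
    (hA' : A' = Matrix.of (Fin.cons (fun j => θ * w' j) (fun i j => if i = j then 1 else 0)))
    (v : Fin (r + 1) → ℝ)
    (hv : v = fun i => (Real.sqrt (1 + r * θ ^ 2))⁻¹ * (Fin.cons 1 (fun j => -θ * w j) : Fin (r + 1) → ℝ) i) :
    (∑ i, (v i) ^ 2 = 1) ∧
    Matrix.vecMul v A = 0 ∧
    (∀ x : Fin r → ℝ, ∑ j, (x j) ^ 2 ≤ ∑ i, (A.mulVec x i) ^ 2) ∧
    ‖A‖ ≤ Real.sqrt (1 + r * θ ^ 2) ∧ Real.sqrt (1 + r * θ ^ 2) ≤ Real.sqrt 2 ∧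
    ((r : ℝ) ≤ ∑ i, (w i - w' i) ^ 2 →
      ∀ (U' : Matrix (Fin (r + 1)) (Fin r) ℝ) (R' : Matrix (Fin r) (Fin r) ℝ),
        U'ᵀ * U' = 1 → IsUnit R' → A' = U' * R' →
        Real.sqrt (∑ k, (Matrix.vecMul v U' k) ^ 2) ≥
            θ * Real.sqrt (∑ i, (w i - w' i) ^ 2) / (1 + r * θ ^ 2) ∧
        θ * Real.sqrt (∑ i, (w i - w' i) ^ 2) / (1 + r * θ ^ 2) ≥ Real.sqrt r * θ / 2) := by
  set s : ℝ := 1 + r * θ ^ 2 with hs_def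
  have hw2 : ∀ i, w i ^ 2 = 1 := fun i => by rcases hw i with h | h <;> simp [h]
  have hw'2 : ∀ i, w' i ^ 2 = 1 := fun i => by rcases hw' i with h | h <;> simp [h]
  have hwsum : ∑ j, w j ^ 2 = (r : ℝ) := by simp [hw2]
  have hw'sum : ∑ j, w' j ^ 2 = (r : ℝ) := by simp [hw'2]
  have hθsq : θ ^ 2 ≤ 1 / r := by
    have h1 : θ ^ 2 ≤ (1 / Real.sqrt r) ^ 2 := by
      apply pow_le_pow_left₀ hθ hθ'
    calc θ ^ 2 ≤ (1 / Real.sqrt r) ^ 2 := h1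
      _ = 1 / r := by
          rw [div_pow, one_pow, Real.sq_sqrt (Nat.cast_nonneg r)]
  have hrθ : (r : ℝ) * θ ^ 2 ≤ 1 := by
    have hrpos : (0 : ℝ) < r := by exact_mod_cast hr
    calc (r : ℝ) * θ ^ 2 ≤ r * (1 / r) := by
          exact mul_le_mul_of_nonneg_left hθsq (Nat.cast_nonneg r)
      _ = 1 := by field_simp
  have hs1 : (1 : ℝ) ≤ s := by
    have : 0 ≤ (r : ℝ) * θ ^ 2 := by positivity
    linarith
  have hs0 : (0 : ℝ) < s := by linarith
  have hs2 : s ≤ 2 := by rw [hs_def]; linarith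
  have hsqs : Real.sqrt s ^ 2 = s := Real.sq_sqrt hs0.le
  have hsqs0 : 0 < Real.sqrt s := Real.sqrt_pos.mpr hs0
  -- bound on ‖A x‖² for the matrix built from a sign vector u
  have hbound : ∀ (u : Fin r → ℝ), (∑ j, u j ^ 2 = (r : ℝ)) → ∀ x : Fin r → ℝ,
      ∑ i, ((Matrix.of (Fin.cons (fun j => θ * u j)
        (fun i j => if i = j then (1:ℝ) else 0))).mulVec x i) ^ 2 ≤ s * ∑ j, x j ^ 2 := by
    intro u husum x
    rw [cons_mulVec_sq_sum]
    have hcs : (∑ j, u j * x j) ^ 2 ≤ (∑ j, u j ^ 2) * ∑ j, x j ^ 2 :=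
      Finset.sum_mul_sq_le_sq_mul_sq _ _ _
    have h1 : (∑ j, θ * u j * x j) = θ * ∑ j, u j * x j := by
      rw [Finset.mul_sum]; exact Finset.sum_congr rfl fun j _ => by ring
    rw [h1, mul_pow]
    have h2 : θ ^ 2 * (∑ j, u j * x j) ^ 2 ≤ θ ^ 2 * ((r : ℝ) * ∑ j, x j ^ 2) := by
      apply mul_le_mul_of_nonneg_left _ (sq_nonneg θ)
      rw [← husum]; exact hcs
    have hx : 0 ≤ ∑ j, x j ^ 2 := Finset.sum_nonneg fun j _ => sq_nonneg _
    nlinarith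
  -- part 1 : v is a unit vector
  have part1 : ∑ i, (v i) ^ 2 = 1 := by
    have hsum : ∑ i : Fin (r+1), ((Fin.cons 1 (fun j => -θ * w j) : Fin (r+1) → ℝ) i) ^ 2 = s := by
      rw [Fin.sum_univ_succ]
      simp only [Fin.cons_zero, Fin.cons_succ, one_pow]
      have h1 : ∀ j : Fin r, (-θ * w j) ^ 2 = θ ^ 2 * w j ^ 2 := fun j => by ring
      simp only [h1]
      rw [← Finset.mul_sum, hwsum, hs_def]
      ring
    subst hv
    simp only [mul_pow]
    rw [← Finset.mul_sum, hsum, inv_pow, hsqs, inv_mul_cancel₀ hs0.ne']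
  -- part 2 : vᵀ A = 0
  have part2 : Matrix.vecMul v A = 0 := by
    subst hA hv
    rw [cons_vecMul_eq]
    funext j
    simp only [Fin.cons_zero, Fin.cons_succ, Pi.zero_apply]
    ring
  -- part 3 : least singular value ≥ 1
  have part3 : ∀ x : Fin r → ℝ, ∑ j, (x j) ^ 2 ≤ ∑ i, (A.mulVec x i) ^ 2 := by
    intro x
    subst hA
    rw [cons_mulVec_sq_sum]
    have : 0 ≤ (∑ j, θ * w j * x j) ^ 2 := sq_nonneg _
    linarith
  -- part 4 : operator norm bound
  have part4 : ‖A‖ ≤ Real.sqrt s := by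
    apply opNorm_le_of_sq_bound A s hs0.le
    intro x
    rw [hA]
    exact hbound w hwsum x
  -- part 5
  have part5 : Real.sqrt s ≤ Real.sqrt 2 := Real.sqrt_le_sqrt hs2
  refine ⟨part1, part2, part3, part4, part5, ?_⟩
  -- the separation statement
  intro hsep U' R' hU hR hfac
  set D : ℝ := ∑ i, (w i - w' i) ^ 2 with hD_def
  have hD0 : (0 : ℝ) ≤ D := Finset.sum_nonneg fun i _ => sq_nonneg _
  set y : Fin r → ℝ := Matrix.vecMul v U' with hy_def
  set z : Fin r → ℝ := Matrix.vecMul v A' with hz_def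
  have hc : ∀ i, v i = (Real.sqrt s)⁻¹ * (Fin.cons 1 (fun j => -θ * w j) : Fin (r+1) → ℝ) i := by
    intro i; rw [hv]
  -- compute z
  have hz : z = fun j => (Real.sqrt s)⁻¹ * (θ * (w' j - w j)) := by
    rw [hz_def, hA', hv, cons_vecMul_eq]
    funext j
    simp only [Fin.cons_zero, Fin.cons_succ]
    ring
  have hzsum : ∑ j, z j ^ 2 = s⁻¹ * θ ^ 2 * D := by
    rw [hz, hD_def]
    have : ∀ j : Fin r, ((Real.sqrt s)⁻¹ * (θ * (w' j - w j))) ^ 2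
        = (Real.sqrt s)⁻¹ ^ 2 * θ ^ 2 * (w j - w' j) ^ 2 := fun j => by ring
    simp only [this]
    rw [← Finset.mul_sum, inv_pow, hsqs]
  -- z = y ᵥ* R'
  have hzy : z = Matrix.vecMul y R' := by
    rw [hz_def, hy_def, hfac, Matrix.vecMul_vecMul]
  -- ‖R' x‖ = ‖A' x‖ pointwise, hence ≤ √s ‖x‖
  have hRbound : ∀ x : Fin r → ℝ, ∑ i, (R'.mulVec x i) ^ 2 ≤ s * ∑ j, x j ^ 2 := by
    intro x
    have hAR : A'.mulVec x = U'.mulVec (R'.mulVec x) := by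
      rw [hfac, Matrix.mulVec_mulVec]
    have hUiso : ∀ u : Fin r → ℝ, ∑ i, (U'.mulVec u i) ^ 2 = ∑ j, u j ^ 2 := by
      intro u
      have h1 : ∑ i, (U'.mulVec u i) ^ 2 = (U'.mulVec u) ⬝ᵥ (U'.mulVec u) := by
        simp [dotProduct, sq]
      have h2 : (U'.mulVec u) ⬝ᵥ (U'.mulVec u) = (u ᵥ* (U'ᵀ * U')) ⬝ᵥ u := by
        rw [Matrix.dotProduct_mulVec, ← Matrix.vecMul_vecMul]
        congr 1
        rw [Matrix.vecMul_transpose]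
      rw [h1, h2, hU, Matrix.vecMul_one]
      simp [dotProduct, sq]
    have h3 : ∑ i, (R'.mulVec x i) ^ 2 = ∑ i, (A'.mulVec x i) ^ 2 := by
      rw [hAR, hUiso]
    rw [h3, hA']
    exact hbound w' hw'sum x
  -- Cauchy–Schwarz step : ∑ z² ≤ √(∑ y²) ⋅ √s ⋅ √(∑ z²)
  set Y : ℝ := Real.sqrt (∑ k, y k ^ 2) with hY_def
  set N : ℝ := Real.sqrt (∑ j, z j ^ 2) with hN_def
  have hY0 : 0 ≤ Y := Real.sqrt_nonneg _
  have hN0 : 0 ≤ N := Real.sqrt_nonneg _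
  have hNsq : N ^ 2 = ∑ j, z j ^ 2 :=
    Real.sq_sqrt (Finset.sum_nonneg fun j _ => sq_nonneg _)
  have hYsq : Y ^ 2 = ∑ k, y k ^ 2 :=
    Real.sq_sqrt (Finset.sum_nonneg fun k _ => sq_nonneg _)
  have hkey : N ^ 2 ≤ Y * (Real.sqrt s * N) := by
    have h1 : ∑ j, z j ^ 2 = y ⬝ᵥ (R'.mulVec z) := by
      rw [Matrix.dotProduct_mulVec, ← hzy]
      simp [dotProduct, sq]
    have hcs : (∑ j, y j * (R'.mulVec z) j) ^ 2
        ≤ (∑ j, y j ^ 2) * ∑ j, (R'.mulVec z) j ^ 2 :=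
      Finset.sum_mul_sq_le_sq_mul_sq _ _ _
    have h2 : y ⬝ᵥ (R'.mulVec z) ≤ Y * Real.sqrt (∑ j, (R'.mulVec z) j ^ 2) := by
      have := Real.sqrt_le_sqrt hcs
      rw [Real.sqrt_mul (Finset.sum_nonneg fun j _ => sq_nonneg _)] at this
      calc y ⬝ᵥ (R'.mulVec z) ≤ |y ⬝ᵥ (R'.mulVec z)| := le_abs_self _
        _ = Real.sqrt ((∑ j, y j * (R'.mulVec z) j) ^ 2) := by
            rw [Real.sqrt_sq_eq_abs]; rfl
        _ ≤ Y * Real.sqrt (∑ j, (R'.mulVec z) j ^ 2) := by rw [hY_def]; exact this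
    have h3 : Real.sqrt (∑ j, (R'.mulVec z) j ^ 2) ≤ Real.sqrt s * N := by
      calc Real.sqrt (∑ j, (R'.mulVec z) j ^ 2) ≤ Real.sqrt (s * ∑ j, z j ^ 2) :=
            Real.sqrt_le_sqrt (hRbound z)
        _ = Real.sqrt s * N := by rw [Real.sqrt_mul hs0.le, hN_def]
    calc N ^ 2 = y ⬝ᵥ (R'.mulVec z) := by rw [hNsq, h1]
      _ ≤ Y * Real.sqrt (∑ j, (R'.mulVec z) j ^ 2) := h2
      _ ≤ Y * (Real.sqrt s * N) := by
          apply mul_le_mul_of_nonneg_left h3 hY0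
  -- N = θ √D / √s
  have hNval : N = θ * Real.sqrt D / Real.sqrt s := by
    rw [hN_def, hzsum]
    rw [show s⁻¹ * θ ^ 2 * D = (θ * Real.sqrt D / Real.sqrt s) ^ 2 by
      rw [div_pow, mul_pow, Real.sq_sqrt hD0, hsqs]; ring]
    exact Real.sqrt_sq (by positivity)
  have hmain : Y ≥ θ * Real.sqrt D / s := by
    rcases eq_or_lt_of_le hN0 with hN | hN
    · have : θ * Real.sqrt D / Real.sqrt s = 0 := by rw [← hNval, ← hN]
      have hzero : θ * Real.sqrt D = 0 := by
        field_simp [hsqs0.ne'] at this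
        exact this.trans (mul_zero _)
      rw [hzero]
      simpa using hY0
    · have hNle : N ≤ Real.sqrt s * Y := by
        have h' : N * N ≤ (Real.sqrt s * Y) * N := by
          calc N * N = N ^ 2 := (sq N).symm
            _ ≤ Y * (Real.sqrt s * N) := hkey
            _ = (Real.sqrt s * Y) * N := by ring
        exact le_of_mul_le_mul_right h' hN
      have : θ * Real.sqrt D / Real.sqrt s ≤ Real.sqrt s * Y := by rw [← hNval]; exact hNle
      rw [ge_iff_le, div_le_iff₀ hs0]
      calc θ * Real.sqrt D = (θ * Real.sqrt D / Real.sqrt s) * Real.sqrt s :=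
            (div_mul_cancel₀ _ hsqs0.ne').symm
        _ ≤ (Real.sqrt s * Y) * Real.sqrt s := by
            apply mul_le_mul_of_nonneg_right this hsqs0.le
        _ = Y * (Real.sqrt s * Real.sqrt s) := by ring
        _ = Y * s := by rw [Real.mul_self_sqrt hs0.le]
  refine ⟨hmain, ?_⟩
  -- final numeric inequality
  have hDr : Real.sqrt r ≤ Real.sqrt D := Real.sqrt_le_sqrt hsep
  have h1 : Real.sqrt r * θ ≤ θ * Real.sqrt D := by
    rw [mul_comm]
    exact mul_le_mul_of_nonneg_left hDr hθ
  rw [ge_iff_le]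
  exact div_le_div₀ (by positivity) h1 hs0 hs2
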